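/- Let P be the probability distribution on {0,1}^4 with P(1,1,0,0) = 1/2, P(0,0,1,0) = 7/16, P(0,0,0,1) = 1/16, and probability zero elsewhere. Let ≾_P be the total preorder on {1,2,3,4} induced by the marginal means E_P[Y] = (1/2, 1/2, 7/16, 1/16), and let ≾_α be the total preorder induced by E_P[α(Y)] = (1/8, 1/8, 7/48, 1/48). Then ρ(≾_P) = (2, 2, −1, −3), ρ(≾_α) = (0, 0, 3, −3), and the expected empirical AUCs satisfy E_P[AUC(Y, ≾_P)] = 31/48 < E_P[AUC(Y, ≾_α)] = 33/48. In particular, the AUC is not an R*-proper scoring function for the family of all distributions on {0,1}^4. -/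

import Mathlib

open scoped BigOperators

/-- A total preorder on `Fin n`: reflexive, transitive and total. -/
structure TotalPreorder (n : ℕ) where
  rel : Fin n → Fin n → Bool
  refl : ∀ i, rel i i = true
  trans : ∀ i j k, rel i j = true → rel j k = true → rel i k = true
  total : ∀ i j, rel i j = true ∨ rel j i = true

namespace TotalPreorder

/-- The rank vector `ρ_i(≾) = Σ_j (1_{j ≾ i} − 1_{j ≿ i})`. -/
def rho {n : ℕ} (p : TotalPreorder n) (i : Fin n) : ℝ :=
  ∑ j, ((if p.rel j i then (1 : ℝ) else 0) - (if p.rel i j then (1 : ℝ) else 0))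

/-- The total preorder induced by a vector `v`: `i ≾ j ↔ v i ≤ v j`. -/
noncomputable def induced {n : ℕ} (v : Fin n → ℝ) : TotalPreorder n where
  rel i j := decide (v i ≤ v j)
  refl i := by simp
  trans i j k := by
    simp only [decide_eq_true_eq]
    exact le_trans
  total i j := by
    simp only [decide_eq_true_eq]
    exact le_total _ _

/-- `p` is contained in `q` if `i ≾_p j` implies `i ≾_q j`. -/
def contained {n : ℕ} (p q : TotalPreorder n) : Prop :=
  ∀ i j, p.rel i j = true → q.rel i j = true

end TotalPreorder

open TotalPreorder

/-- Expectation of a real-valued function of a binary random vector. -/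
noncomputable def pexp {n : ℕ} (P : PMF (Fin n → Bool)) (f : (Fin n → Bool) → ℝ) : ℝ :=
  ∑ y : Fin n → Bool, (P y).toReal * f y

/-- The marginal functional: `M(P)_i = P[Y_i = 1]`. -/
noncomputable def margin {n : ℕ} (P : PMF (Fin n → Bool)) (i : Fin n) : ℝ :=
  pexp P (fun y => if y i then 1 else 0)

/-- Membership in the weak rank functional `R*(P)`: a total preorder contained in
the preorder induced by the marginal means. -/
def RstarMem {n : ℕ} (P : PMF (Fin n → Bool)) (p : TotalPreorder n) : Prop :=
  p.contained (TotalPreorder.induced (margin P))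

/-- Number of positive outcomes. -/
def n1 {n : ℕ} (y : Fin n → Bool) : ℕ := ∑ i, if y i then 1 else 0

/-- Number of negative outcomes. -/
def n0 {n : ℕ} (y : Fin n → Bool) : ℕ := n - n1 y

/-- AUC weights `α_i(y)`. -/
noncomputable def alpha {n : ℕ} (y : Fin n → Bool) (i : Fin n) : ℝ :=
  if 0 < n1 y ∧ n1 y < n then (if y i then 1 else 0) / ((n0 y : ℝ) * (n1 y : ℝ)) else 0

/-- The empirical area under the ROC curve. -/
noncomputable def AUC {n : ℕ} (y : Fin n → Bool) (p : TotalPreorder n) : ℝ :=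
  1 / 2 + 1 / 2 * ∑ i, alpha y i * rho p i

/-- `s` is an `R*`-proper scoring function for the family `F`. -/
def RStarProper {n : ℕ} (s : (Fin n → Bool) → TotalPreorder n → ℝ)
    (F : Set (PMF (Fin n → Bool))) : Prop :=
  ∀ P ∈ F, ∀ p t : TotalPreorder n, RstarMem P t →
    pexp P (fun y => s y p) ≤ pexp P (fun y => s y t)

/-- `s` is a strictly `R*`-proper scoring function for the family `F`. -/
def StrictlyRStarProper {n : ℕ} (s : (Fin n → Bool) → TotalPreorder n → ℝ)
    (F : Set (PMF (Fin n → Bool))) : Prop :=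
  ∀ P ∈ F, ∀ p t : TotalPreorder n, RstarMem P t →
    pexp P (fun y => s y p) ≤ pexp P (fun y => s y t) ∧
      (pexp P (fun y => s y p) = pexp P (fun y => s y t) ↔ RstarMem P p)


private lemma pexp_eq (P : PMF (Fin 4 → Bool))
    (h1 : P ![true, true, false, false] = 1 / 2)
    (h2 : P ![false, false, true, false] = 7 / 16)
    (h3 : P ![false, false, false, true] = 1 / 16)
    (h0 : ∀ y : Fin 4 → Bool, y ≠ ![true, true, false, false] →
      y ≠ ![false, false, true, false] → y ≠ ![false, false, false, true] → P y = 0)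
    (f : (Fin 4 → Bool) → ℝ) :
    pexp P f = 1 / 2 * f ![true, true, false, false]
      + 7 / 16 * f ![false, false, true, false]
      + 1 / 16 * f ![false, false, false, true] := by
  set A : Fin 4 → Bool := ![true, true, false, false] with hA
  set B : Fin 4 → Bool := ![false, false, true, false] with hB
  set C : Fin 4 → Bool := ![false, false, false, true] with hC
  have hAB : A ≠ B := by rw [hA, hB]; decide
  have hAC : A ≠ C := by rw [hA, hC]; decide
  have hBC : B ≠ C := by rw [hB, hC]; decide
  have key : ∀ y : Fin 4 → Bool, (P y).toReal * f y =
      (if y = A then (1/2 : ℝ) * f A else 0)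
      + (if y = B then (7/16 : ℝ) * f B else 0)
      + (if y = C then (1/16 : ℝ) * f C else 0) := by
    intro y
    by_cases ha : y = A
    · subst ha; rw [h1]
      simp [hAB, hAC, ENNReal.toReal_div]
    · by_cases hb : y = B
      · subst hb; rw [h2]
        simp [hBC, Ne.symm hAB, ENNReal.toReal_div]
      · by_cases hc : y = C
        · subst hc; rw [h3]
          simp [Ne.symm hAC, Ne.symm hBC, ENNReal.toReal_div]
        · rw [h0 y ha hb hc]
          simp [ha, hb, hc]
  unfold pexp
  simp_rw [key]
  rw [Finset.sum_add_distrib, Finset.sum_add_distrib]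
  simp

/-- counter-example showing AUC is not `R*`-proper. -/
theorem auc_counterexample (P : PMF (Fin 4 → Bool))
    (h1 : P ![true, true, false, false] = 1 / 2)
    (h2 : P ![false, false, true, false] = 7 / 16)
    (h3 : P ![false, false, false, true] = 1 / 16)
    (h0 : ∀ y : Fin 4 → Bool, y ≠ ![true, true, false, false] →
      y ≠ ![false, false, true, false] → y ≠ ![false, false, false, true] → P y = 0) :
    margin P = ![1 / 2, 1 / 2, 7 / 16, 1 / 16] ∧
    (fun i => pexp P (fun y => alpha y i)) = ![1 / 8, 1 / 8, 7 / 48, 1 / 48] ∧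
    rho (TotalPreorder.induced (margin P)) = ![2, 2, -1, -3] ∧
    rho (TotalPreorder.induced (fun i => pexp P (fun y => alpha y i))) = ![0, 0, 3, -3] ∧
    pexp P (fun y => AUC y (TotalPreorder.induced (margin P))) = 31 / 48 ∧
    pexp P (fun y => AUC y (TotalPreorder.induced (fun i => pexp P (fun y => alpha y i))))
      = 33 / 48 ∧
    ¬ RStarProper (fun (y : Fin 4 → Bool) p => AUC y p) Set.univ := by
  have hpe := pexp_eq P h1 h2 h3 h0
  have hm : margin P = ![1 / 2, 1 / 2, 7 / 16, 1 / 16] := by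
    funext i
    unfold margin
    rw [hpe]
    fin_cases i <;> norm_num
  have hav : (fun i => pexp P (fun y => alpha y i)) = ![1 / 8, 1 / 8, 7 / 48, 1 / 48] := by
    funext i
    simp only [hpe]
    have hnA : n1 ![true, true, false, false] = 2 := by decide
    have hnB : n1 ![false, false, true, false] = 1 := by decide
    have hnC : n1 ![false, false, false, true] = 1 := by decide
    fin_cases i <;>
      · simp only [alpha, n0, hnA, hnB, hnC]
        norm_num
  have hrhoP : rho (TotalPreorder.induced (margin P)) = ![2, 2, -1, -3] := by
    rw [hm]
    funext i
    unfold rho TotalPreorder.induced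
    fin_cases i <;>
      · simp only [Fin.sum_univ_four, decide_eq_true_eq]
        norm_num [Matrix.cons_val_two, Matrix.cons_val_three]
  have hrhoA : rho (TotalPreorder.induced (fun i => pexp P (fun y => alpha y i)))
      = ![0, 0, 3, -3] := by
    rw [hav]
    funext i
    unfold rho TotalPreorder.induced
    fin_cases i <;>
      · simp only [Fin.sum_univ_four, decide_eq_true_eq]
        norm_num [Matrix.cons_val_two, Matrix.cons_val_three]
  have halA : ∀ p : TotalPreorder 4, AUC ![true, true, false, false] p = 1 / 2 + 1 / 2 *
      (1/4 * rho p 0 + 1/4 * rho p 1) := by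
    intro p
    unfold AUC
    rw [Fin.sum_univ_four]
    have : n1 ![true, true, false, false] = 2 := by decide
    simp only [alpha, n0, this]
    simp
    norm_num
  have halB : ∀ p : TotalPreorder 4, AUC ![false, false, true, false] p = 1 / 2 + 1 / 2 * (1/3 * rho p 2) := by
    intro p
    unfold AUC
    rw [Fin.sum_univ_four]
    have : n1 ![false, false, true, false] = 1 := by decide
    simp only [alpha, n0, this]
    simp
  have halC : ∀ p : TotalPreorder 4, AUC ![false, false, false, true] p = 1 / 2 + 1 / 2 * (1/3 * rho p 3) := by
    intro p
    unfold AUC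
    rw [Fin.sum_univ_four]
    have : n1 ![false, false, false, true] = 1 := by decide
    simp only [alpha, n0, this]
    simp
  have hE1 : pexp P (fun y => AUC y (TotalPreorder.induced (margin P))) = 31 / 48 := by
    rw [hpe, halA, halB, halC, hrhoP]
    norm_num [Matrix.cons_val_zero, Matrix.cons_val_one, Matrix.cons_val_two, Matrix.cons_val_three]
  have hE2 : pexp P (fun y => AUC y
      (TotalPreorder.induced (fun i => pexp P (fun y => alpha y i)))) = 33 / 48 := by
    rw [hpe, halA, halB, halC, hrhoA]
    norm_num [Matrix.cons_val_zero, Matrix.cons_val_one, Matrix.cons_val_two, Matrix.cons_val_three]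
  refine ⟨hm, hav, hrhoP, hrhoA, hE1, hE2, ?_⟩
  intro hcontra
  have hmem : RstarMem P (TotalPreorder.induced (margin P)) := fun i j h => h
  have := hcontra P (Set.mem_univ P)
    (TotalPreorder.induced (fun i => pexp P (fun y => alpha y i)))
    (TotalPreorder.induced (margin P)) hmem
  rw [hE1, hE2] at this
  norm_num at this
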